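/- Let $c \in C[0,t_0]$, $h \in C^1[0,t_0]$ with $h \geq 0$, $h(0)=0$, and $h \not\equiv 0$ in any neighborhood of $x=0$. If $v$ solves $v'' + c(x)v = h'$ on $[0,t_0]$ with $v(0) = v'(0) = 0$, then there exists $\delta > 0$ such that $v(x) > 0$ for all $x \in (0,\delta]$. -/

import Mathlib

open Set

/-- FTC on `[0, t0]` for one-sided derivatives given via `derivWithin`. -/
private lemma ftc_aux {t0 : ℝ} {f f' : ℝ → ℝ}
    (hf : ContinuousOn f (Icc 0 t0))
    (hf' : ContinuousOn f' (Icc 0 t0))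
    (hd : ∀ y ∈ Icc (0:ℝ) t0, HasDerivWithinAt f (f' y) (Icc 0 t0) y)
    {x : ℝ} (hx : x ∈ Icc (0:ℝ) t0) :
    ∫ s in (0:ℝ)..x, f' s = f x - f 0 := by
  rcases eq_or_lt_of_le hx.1 with h0x | h0x
  · simp [← h0x]
  · apply intervalIntegral.integral_eq_sub_of_hasDeriv_right_of_le h0x.le
      (hf.mono (Icc_subset_Icc le_rfl hx.2))
    · intro y hy
      have hyI : y ∈ Icc (0:ℝ) t0 := ⟨hy.1.le, hy.2.le.trans hx.2⟩
      have h1 : Icc (0:ℝ) t0 ∈ nhds y :=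
        Icc_mem_nhds hy.1 (lt_of_lt_of_le hy.2 hx.2)
      exact ((hd y hyI).hasDerivAt h1).hasDerivWithinAt
    · exact (hf'.mono (Icc_subset_Icc le_rfl hx.2)).intervalIntegrable_of_Icc h0x.le

set_option maxHeartbeats 1000000 in
/-- If `v'' + c v = h'` on `[0,t₀]` with `v(0) = v'(0) = 0`, where `h ≥ 0`, `h(0) = 0` and
`h ≢ 0` in any neighborhood of `0`, then `v > 0` on some interval `(0, δ]`. -/
theorem positivity_near_origin (t0 : ℝ) (ht0 : 0 < t0) (c h v : ℝ → ℝ)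
    (hc : ContinuousOn c (Icc 0 t0))
    (hh : ContDiffOn ℝ 1 h (Icc 0 t0))
    (hhnonneg : ∀ x ∈ Icc (0:ℝ) t0, 0 ≤ h x)
    (hh0 : h 0 = 0)
    (hhnontriv : ∀ ε > (0:ℝ), ∃ x, 0 < x ∧ x < ε ∧ x ≤ t0 ∧ 0 < h x)
    (hv : ContDiffOn ℝ 2 v (Icc 0 t0))
    (hvode : ∀ x ∈ Icc (0:ℝ) t0,
      derivWithin (derivWithin v (Icc 0 t0)) (Icc 0 t0) x + c x * v x
        = derivWithin h (Icc 0 t0) x)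
    (hv0 : v 0 = 0) (hv'0 : derivWithin v (Icc 0 t0) 0 = 0) :
    ∃ δ > (0:ℝ), δ ≤ t0 ∧ ∀ x ∈ Ioc (0:ℝ) δ, 0 < v x := by
  have hud : UniqueDiffOn ℝ (Icc (0:ℝ) t0) := uniqueDiffOn_Icc ht0
  set v1 : ℝ → ℝ := derivWithin v (Icc 0 t0) with hv1def
  set v2 : ℝ → ℝ := derivWithin v1 (Icc 0 t0) with hv2def
  set h1 : ℝ → ℝ := derivWithin h (Icc 0 t0) with hh1def
  -- continuity facts
  have hvC : ContinuousOn v (Icc 0 t0) := hv.continuousOn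
  have hv1CD : ContDiffOn ℝ 1 v1 (Icc 0 t0) := hv.derivWithin (m := 1) hud (by norm_num)
  have hv1C : ContinuousOn v1 (Icc 0 t0) := hv1CD.continuousOn
  have hv2C : ContinuousOn v2 (Icc 0 t0) :=
    (hv1CD.derivWithin (m := 0) hud (by norm_num)).continuousOn
  have hh1C : ContinuousOn h1 (Icc 0 t0) :=
    (hh.derivWithin (m := 0) hud (by norm_num)).continuousOn
  -- derivative facts
  have hdv : ∀ y ∈ Icc (0:ℝ) t0, HasDerivWithinAt v (v1 y) (Icc 0 t0) y :=
    fun y hy => (hv.differentiableOn (by norm_num) y hy).hasDerivWithinAt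
  have hdv1 : ∀ y ∈ Icc (0:ℝ) t0, HasDerivWithinAt v1 (v2 y) (Icc 0 t0) y :=
    fun y hy => (hv1CD.differentiableOn (by norm_num) y hy).hasDerivWithinAt
  have hdh : ∀ y ∈ Icc (0:ℝ) t0, HasDerivWithinAt h (h1 y) (Icc 0 t0) y :=
    fun y hy => (hh.differentiableOn (by norm_num) y hy).hasDerivWithinAt
  have hcv : ContinuousOn (fun u => c u * v u) (Icc 0 t0) := hc.mul hvC
  -- the primitive of c * v
  set g : ℝ → ℝ := fun s => ∫ u in (0:ℝ)..s, c u * v u with hgdef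
  have hgC : ContinuousOn g (Icc 0 t0) := by
    have := intervalIntegral.continuousOn_primitive_interval
      (f := fun u => c u * v u) (a := (0:ℝ)) (b := t0) (μ := MeasureTheory.volume)
      (by rw [uIcc_of_le ht0.le]; exact hcv.integrableOn_Icc)
    rwa [uIcc_of_le ht0.le] at this
  -- integral representation of v1
  have hv1x : ∀ x ∈ Icc (0:ℝ) t0, v1 x = h x - g x := by
    intro x hx
    have h1int : ∫ s in (0:ℝ)..x, h1 s = h x := by
      rw [ftc_aux (hh.continuousOn) hh1C hdh hx, hh0, sub_zero]
    have h2int : ∫ s in (0:ℝ)..x, v2 s = v1 x := by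
      rw [ftc_aux hv1C hv2C hdv1 hx, hv'0, sub_zero]
    have hcong : ∫ s in (0:ℝ)..x, v2 s
        = ∫ s in (0:ℝ)..x, (h1 s - c s * v s) := by
      apply intervalIntegral.integral_congr
      intro s hs
      rw [uIcc_of_le hx.1] at hs
      have hsI : s ∈ Icc (0:ℝ) t0 := ⟨hs.1, hs.2.trans hx.2⟩
      have := hvode s hsI
      dsimp only
      linarith
    have hsplit : ∫ s in (0:ℝ)..x, (h1 s - c s * v s)
        = (∫ s in (0:ℝ)..x, h1 s) - ∫ s in (0:ℝ)..x, c s * v s := by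
      apply intervalIntegral.integral_sub
      · exact (hh1C.mono (Icc_subset_Icc le_rfl hx.2)).intervalIntegrable_of_Icc hx.1
      · exact (hcv.mono (Icc_subset_Icc le_rfl hx.2)).intervalIntegrable_of_Icc hx.1
    rw [← h2int, hcong, hsplit, h1int]
  -- integral representation of v
  have hvx : ∀ x ∈ Icc (0:ℝ) t0,
      v x = (∫ s in (0:ℝ)..x, h s) - ∫ s in (0:ℝ)..x, g s := by
    intro x hx
    have h2int : ∫ s in (0:ℝ)..x, v1 s = v x := by
      rw [ftc_aux hvC hv1C hdv hx, hv0, sub_zero]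
    have hcong : ∫ s in (0:ℝ)..x, v1 s = ∫ s in (0:ℝ)..x, (h s - g s) := by
      apply intervalIntegral.integral_congr
      intro s hs
      rw [uIcc_of_le hx.1] at hs
      exact hv1x s ⟨hs.1, hs.2.trans hx.2⟩
    have hsplit : ∫ s in (0:ℝ)..x, (h s - g s)
        = (∫ s in (0:ℝ)..x, h s) - ∫ s in (0:ℝ)..x, g s := by
      apply intervalIntegral.integral_sub
      · exact (hh.continuousOn.mono (Icc_subset_Icc le_rfl hx.2)).intervalIntegrable_of_Icc hx.1
      · exact (hgC.mono (Icc_subset_Icc le_rfl hx.2)).intervalIntegrable_of_Icc hx.1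
    rw [← h2int, hcong, hsplit]
  -- bound on c
  obtain ⟨C, hC⟩ := isCompact_Icc.exists_bound_of_continuousOn hc
  set M : ℝ := |C| + 1 with hMdef
  have hM0 : 0 < M := by positivity
  have hMb : ∀ x ∈ Icc (0:ℝ) t0, |c x| ≤ M := by
    intro x hx
    calc |c x| ≤ C := hC x hx
    _ ≤ |C| + 1 := by nlinarith [abs_nonneg C, le_abs_self C]
  -- choice of δ
  set δ : ℝ := min t0 (min 1 (1 / (4 * M))) with hδdef
  have hδpos : 0 < δ := by
    apply lt_min ht0
    apply lt_min one_pos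
    positivity
  have hδt0 : δ ≤ t0 := min_le_left _ _
  have hδ1 : δ ≤ 1 := (min_le_right _ _).trans (min_le_left _ _)
  have hδM : M * δ * δ ≤ 1 / 4 := by
    have h1 : δ ≤ 1 / (4 * M) := (min_le_right _ _).trans (min_le_right _ _)
    have h1' : δ * (4 * M) ≤ 1 := (le_div_iff₀ (by positivity)).mp h1
    have h2 : M * δ ≤ 1 / 4 := by nlinarith
    nlinarith [hδpos.le, hM0.le, mul_le_mul_of_nonneg_right h2 hδpos.le]
  set H : ℝ → ℝ := fun x => ∫ s in (0:ℝ)..x, h s with hHdef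
  -- H is monotone on [0, δ]
  have hHmono : ∀ a b : ℝ, 0 ≤ a → a ≤ b → b ≤ t0 → H a ≤ H b := by
    intro a b ha hab hb
    have hint1 : IntervalIntegrable h MeasureTheory.volume 0 a :=
      (hh.continuousOn.mono (Icc_subset_Icc le_rfl (hab.trans hb))).intervalIntegrable_of_Icc ha
    have hint2 : IntervalIntegrable h MeasureTheory.volume a b :=
      (hh.continuousOn.mono (Icc_subset_Icc ha hb)).intervalIntegrable_of_Icc hab
    have hadd : H a + ∫ s in a..b, h s = H b :=
      intervalIntegral.integral_add_adjacent_intervals hint1 hint2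
    have hnn : 0 ≤ ∫ s in a..b, h s := by
      apply intervalIntegral.integral_nonneg hab
      intro u hu
      exact hhnonneg u ⟨ha.trans hu.1, hu.2.trans hb⟩
    linarith
  have hHnonneg : ∀ x : ℝ, 0 ≤ x → x ≤ t0 → 0 ≤ H x := by
    intro x hx hxt
    have := hHmono 0 x le_rfl hx hxt
    simpa [hHdef] using this
  -- key pointwise bound: |v x| ≤ 2 H x on [0, δ]
  have hbound : ∀ x ∈ Icc (0:ℝ) δ, |v x| ≤ 2 * H x := by
    intro x hx
    have hxt0 : x ≤ t0 := hx.2.trans hδt0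
    have habsC : ContinuousOn (fun s => |v s|) (Icc 0 x) :=
      (hvC.mono (Icc_subset_Icc le_rfl hxt0)).abs
    obtain ⟨s0, hs0mem, hs0max⟩ :=
      isCompact_Icc.exists_isMaxOn (nonempty_Icc.mpr hx.1) habsC
    set K : ℝ := |v s0| with hKdef
    have hK0 : 0 ≤ K := abs_nonneg _
    have hKmax : ∀ s ∈ Icc (0:ℝ) x, |v s| ≤ K := fun s hs => hs0max hs
    have hs0I : s0 ∈ Icc (0:ℝ) t0 := ⟨hs0mem.1, hs0mem.2.trans hxt0⟩
    -- bound g on [0, s0]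
    have hgb : ∀ s ∈ uIoc (0:ℝ) s0, ‖g s‖ ≤ M * K * x := by
      intro s hs
      rw [uIoc_of_le hs0mem.1] at hs
      have hsx : s ∈ Icc (0:ℝ) x := ⟨hs.1.le, hs.2.trans hs0mem.2⟩
      have : ‖g s‖ ≤ M * K * |s - 0| := by
        apply intervalIntegral.norm_integral_le_of_norm_le_const
        intro u hu
        rw [uIoc_of_le hs.1.le] at hu
        have huI : u ∈ Icc (0:ℝ) t0 := ⟨hu.1.le, (hu.2.trans hsx.2).trans hxt0⟩
        have h1 : |c u| ≤ M := hMb u huI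
        have h2 : |v u| ≤ K := hKmax u ⟨hu.1.le, hu.2.trans hsx.2⟩
        calc ‖c u * v u‖ = |c u| * |v u| := abs_mul _ _
        _ ≤ M * K := by
            apply mul_le_mul h1 h2 (abs_nonneg _) (hM0.le)
      calc ‖g s‖ ≤ M * K * |s - 0| := this
      _ ≤ M * K * x := by
          rw [sub_zero, abs_of_nonneg hs.1.le]
          have := hsx.2
          nlinarith [mul_nonneg hM0.le hK0, hsx.2]
    have hgint : ‖∫ s in (0:ℝ)..s0, g s‖ ≤ M * K * x * |s0 - 0| :=
      intervalIntegral.norm_integral_le_of_norm_le_const hgb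
    have hgint2 : |∫ s in (0:ℝ)..s0, g s| ≤ M * K * x * x := by
      rw [sub_zero, abs_of_nonneg hs0mem.1] at hgint
      calc |∫ s in (0:ℝ)..s0, g s| ≤ M * K * x * s0 := hgint
      _ ≤ M * K * x * x := by nlinarith [mul_nonneg (mul_nonneg (mul_nonneg hM0.le hK0) hx.1) (sub_nonneg.mpr hs0mem.2)]
    -- K ≤ H s0 + K/4
    have hrep := hvx s0 hs0I
    have hKle : K ≤ H s0 + K / 4 := by
      have habs : |v s0| ≤ |H s0| + |∫ s in (0:ℝ)..s0, g s| := by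
        rw [hrep]; exact (abs_sub _ _)
      have hHs0 : |H s0| = H s0 := abs_of_nonneg (hHnonneg s0 hs0mem.1 hs0I.2)
      have hMKx : M * K * x * x ≤ K / 4 := by
        have hxδ : x ≤ δ := hx.2
        have hxx : x * x ≤ δ * δ := mul_le_mul hxδ hxδ hx.1 hδpos.le
        have h5 : M * x * x ≤ M * δ * δ := by
          calc M * x * x = M * (x * x) := by ring
          _ ≤ M * (δ * δ) := mul_le_mul_of_nonneg_left hxx hM0.le
          _ = M * δ * δ := by ring
        have h6 : M * x * x ≤ 1 / 4 := h5.trans hδM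
        nlinarith [mul_le_mul_of_nonneg_left h6 hK0]
      calc K = |v s0| := rfl
      _ ≤ |H s0| + |∫ s in (0:ℝ)..s0, g s| := habs
      _ ≤ H s0 + K / 4 := by rw [hHs0]; exact add_le_add le_rfl (hgint2.trans hMKx)
    have hHs0x : H s0 ≤ H x := hHmono s0 x hs0mem.1 hs0mem.2 hxt0
    have hvxK : |v x| ≤ K := hKmax x ⟨hx.1, le_rfl⟩
    linarith
  -- conclusion
  refine ⟨δ, hδpos, hδt0, ?_⟩
  intro x hx
  have hxt0 : x ≤ t0 := hx.2.trans hδt0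
  have hxI : x ∈ Icc (0:ℝ) t0 := ⟨hx.1.le, hxt0⟩
  -- H x > 0
  have hHpos : 0 < H x := by
    obtain ⟨y, hy0, hyx, hyt0, hyh⟩ := hhnontriv x hx.1
    have hyint : y ∈ Icc (0:ℝ) t0 := ⟨hy0.le, hyt0⟩
    have hycont : ContinuousAt h y := by
      apply (hh.continuousOn y hyint).continuousAt
      exact Icc_mem_nhds hy0 (lt_of_lt_of_le hyx hxt0)
    have hev : {u : ℝ | 0 < h u} ∈ nhds y :=
      hycont.preimage_mem_nhds (Ioi_mem_nhds hyh)
    obtain ⟨ε, hε, hball⟩ := Metric.mem_nhds_iff.mp hev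
    set r : ℝ := min ε y with hrdef
    have hr0 : 0 < r := lt_min hε hy0
    have hsub : Ioo (y - r) y ⊆ Function.support h ∩ Ioc 0 x := by
      intro u hu
      have hu0 : 0 < u := by
        have : y - r ≥ y - y := by
          have : r ≤ y := min_le_right _ _
          linarith
        linarith [hu.1]
      have hux : u ≤ x := (hu.2.trans hyx).le
      have huball : u ∈ Metric.ball y ε := by
        rw [Real.ball_eq_Ioo]
        constructor
        · have : r ≤ ε := min_le_left _ _
          linarith [hu.1]
        · linarith [hu.2]
      have hupos : 0 < h u := hball huball
      exact ⟨fun hcon => by simp [hcon] at hupos, hu0, hux⟩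
    have hint : IntervalIntegrable h MeasureTheory.volume 0 x :=
      (hh.continuousOn.mono (Icc_subset_Icc le_rfl hxt0)).intervalIntegrable_of_Icc hx.1.le
    have hae : 0 ≤ᵐ[MeasureTheory.volume.restrict (uIoc 0 x)] h := by
      rw [uIoc_of_le hx.1.le]
      exact MeasureTheory.ae_restrict_of_forall_mem measurableSet_Ioc
        (fun u hu => hhnonneg u ⟨hu.1.le, hu.2.trans hxt0⟩)
    rw [hHdef]
    rw [intervalIntegral.integral_pos_iff_support_of_nonneg_ae' hae hint]
    refine ⟨hx.1, ?_⟩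
    calc (0:ENNReal) < MeasureTheory.volume (Ioo (y - r) y) := by
          rw [Real.volume_Ioo]
          apply ENNReal.ofReal_pos.mpr
          linarith
    _ ≤ MeasureTheory.volume (Function.support h ∩ Ioc 0 x) :=
          MeasureTheory.measure_mono hsub
  -- estimate ∫ g
  have hgb2 : ∀ s ∈ uIoc (0:ℝ) x, ‖g s‖ ≤ M * (2 * H x) * x := by
    intro s hs
    rw [uIoc_of_le hx.1.le] at hs
    have : ‖g s‖ ≤ M * (2 * H x) * |s - 0| := by
      apply intervalIntegral.norm_integral_le_of_norm_le_const
      intro u hu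
      rw [uIoc_of_le hs.1.le] at hu
      have huδ : u ∈ Icc (0:ℝ) δ := ⟨hu.1.le, (hu.2.trans hs.2).trans hx.2⟩
      have hut0 : u ∈ Icc (0:ℝ) t0 := ⟨hu.1.le, huδ.2.trans hδt0⟩
      have h1 : |c u| ≤ M := hMb u hut0
      have h2 : |v u| ≤ 2 * H u := hbound u huδ
      have h3 : H u ≤ H x := hHmono u x hu.1.le (hu.2.trans hs.2) hxt0
      calc ‖c u * v u‖ = |c u| * |v u| := abs_mul _ _
      _ ≤ M * (2 * H x) := by
          apply mul_le_mul h1 _ (abs_nonneg _) hM0.le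
          linarith
    calc ‖g s‖ ≤ M * (2 * H x) * |s - 0| := this
    _ ≤ M * (2 * H x) * x := by
        rw [sub_zero, abs_of_nonneg hs.1.le]
        nlinarith [mul_nonneg hM0.le (by linarith [hHpos.le] : (0:ℝ) ≤ 2 * H x), hs.2]
  have hgint : ‖∫ s in (0:ℝ)..x, g s‖ ≤ M * (2 * H x) * x * |x - 0| :=
    intervalIntegral.norm_integral_le_of_norm_le_const hgb2
  have hgint2 : |∫ s in (0:ℝ)..x, g s| ≤ H x / 2 := by
    rw [sub_zero, abs_of_nonneg hx.1.le] at hgint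
    have hxδ : x ≤ δ := hx.2
    calc |∫ s in (0:ℝ)..x, g s| ≤ M * (2 * H x) * x * x := hgint
    _ ≤ H x / 2 := by
        have hxx : x * x ≤ δ * δ := mul_le_mul hxδ hxδ hx.1.le hδpos.le
        have h5 : M * x * x ≤ M * δ * δ := by
          calc M * x * x = M * (x * x) := by ring
          _ ≤ M * (δ * δ) := mul_le_mul_of_nonneg_left hxx hM0.le
          _ = M * δ * δ := by ring
        have h6 : M * x * x ≤ 1 / 4 := h5.trans hδM
        nlinarith [mul_le_mul_of_nonneg_left h6 (by linarith [hHpos.le] : (0:ℝ) ≤ 2 * H x)]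
  have hrep := hvx x hxI
  have : v x ≥ H x - |∫ s in (0:ℝ)..x, g s| := by
    rw [hrep]
    have := le_abs_self (∫ s in (0:ℝ)..x, g s)
    linarith
  linarith
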